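/- Lower-bound value gap inequality: under the stated hypotheses, T₁ − S₁ ≥ (H/10) · ∑_{h=1}^{⌊H/2⌋} (c − a_h). -/

import Mathlib

open Finset

noncomputable def Fv (H : ℕ) (x : ℕ → ℝ) : ℝ :=
  ∑ h ∈ Ioc 0 H, ((H : ℝ) - (h : ℝ)) * x h * ∏ j ∈ Ioc 0 (h - 1), (1 - x j)

noncomputable def Xh (B : ℝ) (b : ℕ → ℝ) (m : ℕ) : ℕ → ℝ := fun h => if h ≤ m then B else b h

lemma teleF (H : ℕ) (B : ℝ) (b : ℕ → ℝ) :
    Fv H (Xh B b H) - Fv H (Xh B b 0)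
      = ∑ m ∈ range H, (Fv H (Xh B b (m+1)) - Fv H (Xh B b m)) :=
  (Finset.sum_range_sub (fun m => Fv H (Xh B b m)) H).symm

lemma diffF (H m : ℕ) (hm : m + 1 ≤ H) (B : ℝ) (b : ℕ → ℝ) :
    Fv H (Xh B b (m+1)) - Fv H (Xh B b m)
      = (B - b (m+1)) * (1-B)^m *
        (((H:ℝ) - (m+1 : ℕ)) - ∑ h ∈ Ioc (m+1) H, ((H:ℝ) - (h:ℝ)) * b h *
            ∏ j ∈ Ioc (m+1) (h-1), (1 - b j)) := by
  simp only [Fv]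
  rw [← Finset.sum_sub_distrib]
  rw [← Finset.sum_Ioc_consecutive _ (Nat.zero_le (m+1)) hm,
      Finset.sum_Ioc_succ_top (Nat.zero_le m)]
  have h1 : ∑ h ∈ Ioc 0 m,
      (((H : ℝ) - h) * (Xh B b (m+1)) h * ∏ j ∈ Ioc 0 (h - 1), (1 - (Xh B b (m+1)) j)
       - ((H : ℝ) - h) * (Xh B b m) h * ∏ j ∈ Ioc 0 (h - 1), (1 - (Xh B b m) j)) = 0 := by
    apply Finset.sum_eq_zero
    intro h hh
    simp only [mem_Ioc] at hh
    have hx : Xh B b (m+1) h = Xh B b m h := by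
      simp only [Xh, if_pos hh.2, if_pos (hh.2.trans (Nat.le_succ m))]
    have hp : ∀ j ∈ Ioc 0 (h-1), (1 - (Xh B b (m+1)) j) = (1 - (Xh B b m) j) := by
      intro j hj
      simp only [mem_Ioc] at hj
      have : j ≤ m := le_trans hj.2 (le_trans (Nat.pred_le h) hh.2)
      simp only [Xh, if_pos this, if_pos (this.trans (Nat.le_succ m))]
    rw [hx, Finset.prod_congr rfl hp, sub_self]
  rw [h1, zero_add]
  -- middle term
  have hmid : (((H : ℝ) - (m+1:ℕ)) * (Xh B b (m+1)) (m+1) *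
        ∏ j ∈ Ioc 0 ((m+1) - 1), (1 - (Xh B b (m+1)) j)
      - ((H : ℝ) - (m+1:ℕ)) * (Xh B b m) (m+1) *
        ∏ j ∈ Ioc 0 ((m+1) - 1), (1 - (Xh B b m) j))
      = ((H:ℝ) - (m+1:ℕ)) * (B - b (m+1)) * (1-B)^m := by
    have e1 : (Xh B b (m+1)) (m+1) = B := if_pos le_rfl
    have e2 : (Xh B b m) (m+1) = b (m+1) := if_neg (Nat.not_succ_le_self m)
    have e3 : ∀ j ∈ Ioc 0 ((m+1)-1), (1 - (Xh B b (m+1)) j) = 1 - B := by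
      intro j hj; simp only [mem_Ioc, Nat.add_sub_cancel] at hj
      simp [Xh, if_pos (hj.2.trans (Nat.le_succ m))]
    have e4 : ∀ j ∈ Ioc 0 ((m+1)-1), (1 - (Xh B b m) j) = 1 - B := by
      intro j hj; simp only [mem_Ioc, Nat.add_sub_cancel] at hj
      simp [Xh, if_pos hj.2]
    rw [e1, e2, Finset.prod_congr rfl e3, Finset.prod_congr rfl e4,
        Finset.prod_const, Nat.card_Ioc, Nat.add_sub_cancel]
    simp only [Nat.sub_zero]
    ring
  rw [hmid]
  -- tail
  have htail : ∑ h ∈ Ioc (m+1) H,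
      (((H : ℝ) - h) * (Xh B b (m+1)) h * ∏ j ∈ Ioc 0 (h - 1), (1 - (Xh B b (m+1)) j)
       - ((H : ℝ) - h) * (Xh B b m) h * ∏ j ∈ Ioc 0 (h - 1), (1 - (Xh B b m) j))
      = ∑ h ∈ Ioc (m+1) H, (-(B - b (m+1)) * (1-B)^m) *
          (((H:ℝ) - h) * b h * ∏ j ∈ Ioc (m+1) (h-1), (1 - b j)) := by
    apply Finset.sum_congr rfl
    intro h hh
    simp only [mem_Ioc] at hh
    have hx1 : (Xh B b (m+1)) h = b h := if_neg (by omega)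
    have hx2 : (Xh B b m) h = b h := if_neg (by omega)
    have hsplit : m + 1 ≤ h - 1 := by omega
    rw [hx1, hx2, ← Finset.prod_Ioc_consecutive _ (Nat.zero_le (m+1)) hsplit,
        ← Finset.prod_Ioc_consecutive (fun j => (1 - (Xh B b m) j)) (Nat.zero_le (m+1)) hsplit]
    have p1 : ∏ j ∈ Ioc 0 (m+1), (1 - (Xh B b (m+1)) j) = (1-B)^(m+1) := by
      rw [Finset.prod_congr rfl (fun j hj => ?_), Finset.prod_const, Nat.card_Ioc,
          Nat.sub_zero]
      simp only [mem_Ioc] at hj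
      simp [Xh, if_pos hj.2]
    have p2 : ∏ j ∈ Ioc 0 (m+1), (1 - (Xh B b m) j) = (1-B)^m * (1 - b (m+1)) := by
      rw [Finset.prod_Ioc_succ_top (Nat.zero_le m)]
      congr 1
      · rw [Finset.prod_congr rfl (fun j hj => ?_), Finset.prod_const, Nat.card_Ioc,
            Nat.sub_zero]
        simp only [mem_Ioc] at hj
        simp [Xh, if_pos hj.2]
      · simp [Xh]
    have p3 : ∀ j ∈ Ioc (m+1) (h-1), (1 - (Xh B b (m+1)) j) = 1 - b j := by
      intro j hj; simp only [mem_Ioc] at hj; simp [Xh, if_neg (by omega : ¬ j ≤ m+1)]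
    have p4 : ∀ j ∈ Ioc (m+1) (h-1), (1 - (Xh B b m) j) = 1 - b j := by
      intro j hj; simp only [mem_Ioc] at hj; simp [Xh, if_neg (by omega : ¬ j ≤ m)]
    rw [p1, p2, Finset.prod_congr rfl p3, Finset.prod_congr rfl p4]
    ring
  rw [htail, ← Finset.mul_sum]
  ring

lemma gaussF (k : ℕ) : ∀ n : ℕ, ∑ h ∈ Ioc k (k+n), (((k:ℝ)+(n:ℝ)) - (h:ℝ)) = n*(n-1)/2 := by
  intro n
  induction n with
  | zero => simp
  | succ n ih =>
    rw [show k + (n+1) = (k+n) + 1 from rfl, Finset.sum_Ioc_succ_top (Nat.le_add_right k n)]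
    have e : ∑ h ∈ Ioc k (k+n), (((k:ℝ)+((n:ℝ)+1)) - (h:ℝ))
        = ∑ h ∈ Ioc k (k+n), ((((k:ℝ)+(n:ℝ)) - (h:ℝ)) + 1) := by
      apply Finset.sum_congr rfl; intro h _; ring
    push_cast [e, ih, Finset.sum_add_distrib, Finset.sum_const, Nat.card_Ioc,
      Nat.add_sub_cancel_left]
    ring

lemma tailBound (H k : ℕ) (hkH : k ≤ H) (B : ℝ) (hB0 : 0 ≤ B) (hB1 : B ≤ 1)
    (b : ℕ → ℝ) (hb : ∀ j ∈ Ioc 0 H, 0 ≤ b j ∧ b j ≤ B) :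
    ∑ h ∈ Ioc k H, ((H:ℝ) - (h:ℝ)) * b h * ∏ j ∈ Ioc k (h-1), (1 - b j)
      ≤ B * (((H-k:ℕ):ℝ) * (((H-k:ℕ):ℝ) - 1) / 2) := by
  have step : ∑ h ∈ Ioc k H, ((H:ℝ) - (h:ℝ)) * b h * ∏ j ∈ Ioc k (h-1), (1 - b j)
      ≤ ∑ h ∈ Ioc k H, ((H:ℝ) - (h:ℝ)) * B := by
    apply Finset.sum_le_sum
    intro h hh
    simp only [mem_Ioc] at hh
    have hHh : (0:ℝ) ≤ (H:ℝ) - h := by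
      have : (h:ℝ) ≤ H := Nat.cast_le.mpr hh.2
      linarith
    have hbh := hb h (by simp only [mem_Ioc]; omega)
    have hprod1 : ∏ j ∈ Ioc k (h-1), (1 - b j) ≤ 1 := by
      apply Finset.prod_le_one
      · intro j hj
        simp only [mem_Ioc] at hj
        have := hb j (by simp only [mem_Ioc]; omega)
        linarith [this.2]
      · intro j hj
        simp only [mem_Ioc] at hj
        have := hb j (by simp only [mem_Ioc]; omega)
        linarith [this.1]
    have hprod0 : 0 ≤ ∏ j ∈ Ioc k (h-1), (1 - b j) := by
      apply Finset.prod_nonneg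
      intro j hj
      simp only [mem_Ioc] at hj
      have := hb j (by simp only [mem_Ioc]; omega)
      linarith [this.2]
    calc ((H:ℝ) - h) * b h * ∏ j ∈ Ioc k (h-1), (1 - b j)
        ≤ ((H:ℝ) - h) * b h * 1 := by
          apply mul_le_mul_of_nonneg_left hprod1 (mul_nonneg hHh hbh.1)
      _ = ((H:ℝ) - h) * b h := by ring
      _ ≤ ((H:ℝ) - h) * B := mul_le_mul_of_nonneg_left hbh.2 hHh
  refine step.trans ?_
  rw [← Finset.sum_mul]
  have hsum : ∑ h ∈ Ioc k H, ((H:ℝ) - (h:ℝ)) = ((H-k:ℕ):ℝ) * (((H-k:ℕ):ℝ) - 1) / 2 := by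
    have := gaussF k (H - k)
    rw [Nat.add_sub_cancel' hkH] at this
    have hc : ((k:ℝ) + ((H-k:ℕ):ℝ)) = (H:ℝ) := by
      push_cast [Nat.cast_sub hkH]; ring
    rw [hc] at this
    exact this
  rw [hsum]
  exact le_of_eq (by ring)

lemma mainF (H : ℕ) (hH : 3 ≤ H) (B : ℝ) (b : ℕ → ℝ)
    (hBH : 3 * B * H ≤ 4) (hB0 : 0 ≤ B)
    (hb : ∀ j ∈ Ioc 0 H, 0 ≤ b j ∧ b j ≤ B) :
    (H:ℝ)/10 * ∑ h ∈ Icc 1 (H/2), (B - b h) ≤ Fv H (Xh B b H) - Fv H (Xh B b 0) := by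
  have hHR : (3:ℝ) ≤ (H:ℝ) := by exact_mod_cast hH
  have hH0 : (0:ℝ) < H := by linarith
  have hB1 : B ≤ 1 := by nlinarith
  set E : ℕ → ℝ := fun m => if m + 1 ≤ H/2 then (H:ℝ)/10 * (B - b (m+1)) else 0 with hE
  have key : ∀ m ∈ range H, E m ≤ Fv H (Xh B b (m+1)) - Fv H (Xh B b m) := by
    intro m hm
    have hm1H : m + 1 ≤ H := mem_range.mp hm
    rw [diffF H m hm1H B b]
    have hbm1 := hb (m+1) (by simp only [mem_Ioc]; omega)
    have hBb : 0 ≤ B - b (m+1) := by linarith [hbm1.2]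
    have hpow0 : 0 ≤ (1-B)^m := pow_nonneg (by linarith) m
    set n : ℕ := H - (m+1) with hn
    have hncast : ((H:ℝ) - ((m+1:ℕ):ℝ)) = (n:ℝ) := by
      rw [hn, Nat.cast_sub hm1H]
    have htail := tailBound H (m+1) hm1H B hB0 hB1 b hb
    rw [← hn] at htail
    have hn0 : (0:ℝ) ≤ (n:ℝ) := Nat.cast_nonneg n
    have hnH : (n:ℝ) ≤ (H:ℝ) := by
      have : n ≤ H := by omega
      exact_mod_cast this
    have hbr0 : (0:ℝ) ≤ ((H:ℝ) - ((m+1:ℕ):ℝ)) - ∑ h ∈ Ioc (m+1) H, ((H:ℝ) - (h:ℝ)) * b h *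
        ∏ j ∈ Ioc (m+1) (h-1), (1 - b j) := by
      rw [hncast]
      nlinarith [mul_nonneg hn0 (by linarith : (0:ℝ) ≤ (H:ℝ) - ((n:ℝ) - 1)),
        mul_nonneg (mul_nonneg hB0 hn0) (by linarith : (0:ℝ) ≤ (H:ℝ)),
        mul_nonneg (by linarith : (0:ℝ) ≤ 4 - 3*B*(H:ℝ)) (mul_nonneg hn0 hn0)]
    by_cases hcase : m + 1 ≤ H/2
    · -- main case
      have hEm : E m = (H:ℝ)/10 * (B - b (m+1)) := if_pos hcase
      have hhalf : ((m+1:ℕ):ℝ) ≤ (H:ℝ)/2 := by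
        calc ((m+1:ℕ):ℝ) ≤ ((H/2:ℕ):ℝ) := by exact_mod_cast hcase
          _ ≤ (H:ℝ)/2 := Nat.cast_div_le
      have hnhalf : (H:ℝ)/2 ≤ (n:ℝ) := by
        rw [← hncast]; push_cast at hhalf ⊢; linarith
      -- bracket ≥ H/3
      have hbr : (H:ℝ)/3 ≤ ((H:ℝ) - ((m+1:ℕ):ℝ)) - ∑ h ∈ Ioc (m+1) H, ((H:ℝ) - (h:ℝ)) * b h *
          ∏ j ∈ Ioc (m+1) (h-1), (1 - b j) := by
        rw [hncast]
        nlinarith [mul_nonneg (by linarith : (0:ℝ) ≤ 2*(n:ℝ) - (H:ℝ)) (by linarith : (0:ℝ) ≤ (H:ℝ) - (n:ℝ)),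
          mul_nonneg (by linarith : (0:ℝ) ≤ 4 - 3*B*(H:ℝ)) (mul_nonneg hn0 (by linarith : (0:ℝ) ≤ (n:ℝ) - 1)),
          mul_nonneg hB0 hn0]
      -- pow ≥ 1/3
      have hpow : (1:ℝ)/3 ≤ (1-B)^m := by
        have hber : 1 + (m:ℝ) * (-B) ≤ (1 + (-B))^m :=
          one_add_mul_le_pow (by linarith : (-2:ℝ) ≤ -B) m
        have hmB : (m:ℝ) * B ≤ 2/3 := by
          have hmle : (m:ℝ) ≤ (H:ℝ)/2 := by
            have : (m:ℝ) ≤ ((m+1:ℕ):ℝ) := by push_cast; linarith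
            linarith
          nlinarith
        have : (1:ℝ) + (m:ℝ) * (-B) = 1 - (m:ℝ)*B := by ring
        rw [this] at hber
        have h2 : (1:ℝ) + -B = 1 - B := by ring
        rw [h2] at hber
        linarith
      rw [hEm]
      calc (H:ℝ)/10 * (B - b (m+1)) ≤ ((1:ℝ)/3 * ((H:ℝ)/3)) * (B - b (m+1)) := by
            apply mul_le_mul_of_nonneg_right _ hBb
            linarith
        _ ≤ ((1-B)^m * (((H:ℝ) - ((m+1:ℕ):ℝ)) - ∑ h ∈ Ioc (m+1) H, ((H:ℝ) - (h:ℝ)) * b h *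
              ∏ j ∈ Ioc (m+1) (h-1), (1 - b j))) * (B - b (m+1)) := by
            apply mul_le_mul_of_nonneg_right _ hBb
            exact mul_le_mul hpow hbr (by linarith) hpow0
        _ = (B - b (m+1)) * (1-B)^m * (((H:ℝ) - ((m+1:ℕ):ℝ)) - ∑ h ∈ Ioc (m+1) H, ((H:ℝ) - (h:ℝ)) * b h *
              ∏ j ∈ Ioc (m+1) (h-1), (1 - b j)) := by ring
    · have hEm : E m = 0 := if_neg hcase
      rw [hEm]
      exact mul_nonneg (mul_nonneg hBb hpow0) hbr0
  calc (H:ℝ)/10 * ∑ h ∈ Icc 1 (H/2), (B - b h) = ∑ m ∈ range H, E m := by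
        rw [Finset.mul_sum]
        rw [show Icc 1 (H/2) = Ico 1 (H/2+1) from (Finset.Ico_add_one_right_eq_Icc 1 (H/2)),
          Finset.sum_Ico_eq_sum_range]
        simp only [Nat.add_sub_cancel]
        have hsub : range (H/2) ⊆ range H := by
          apply Finset.range_subset_range.mpr; omega
        rw [← Finset.sum_subset hsub (fun x _ hx => by
          simp only [hE]
          have : ¬ (x + 1 ≤ H/2) := by
            simp only [mem_range, not_lt] at hx; omega
          exact if_neg this)]
        apply Finset.sum_congr rfl
        intro m hm
        simp only [mem_range] at hm
        simp only [hE, if_pos (by omega : m + 1 ≤ H/2)]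
        rw [show 1 + m = m + 1 from by omega]
    _ ≤ ∑ m ∈ range H, (Fv H (Xh B b (m+1)) - Fv H (Xh B b m)) := Finset.sum_le_sum key
    _ = Fv H (Xh B b H) - Fv H (Xh B b 0) := (teleF H B b).symm

theorem statement8 (H : ℕ) (hH : 3 ≤ H) (c : ℝ) (hc0 : 0 ≤ c) (hc3 : 3 * c ≤ 1 / (H : ℝ))
    (a : ℕ → ℝ) (ha : ∀ h ∈ Finset.Icc 1 H, |a h| ≤ c) :
    (H : ℝ) / 10 * ∑ h ∈ Finset.Icc 1 (H / 2), (c - a h) ≤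
      (∑ h ∈ Finset.Icc 1 H,
          ((H : ℝ) - (h : ℝ)) * (c + 1 / (H : ℝ)) * (1 - c - 1 / (H : ℝ)) ^ (h - 1)) -
        ∑ h ∈ Finset.Icc 1 H,
          ((H : ℝ) - (h : ℝ)) * (a h + 1 / (H : ℝ)) *
            ∏ j ∈ Finset.Icc 1 (h - 1), (1 - a j - 1 / (H : ℝ)) := by
  have hHR : (3:ℝ) ≤ (H:ℝ) := by exact_mod_cast hH
  have hH0 : (0:ℝ) < (H:ℝ) := by linarith
  have h1H : (1/(H:ℝ)) * (H:ℝ) = 1 := one_div_mul_cancel (ne_of_gt hH0)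
  have hBH : 3 * (c + 1/(H:ℝ)) * (H:ℝ) ≤ 4 := by nlinarith
  have hB0 : 0 ≤ c + 1/(H:ℝ) := by positivity
  have hcH : c ≤ 1/(H:ℝ) := by
    have : 0 < 1/(H:ℝ) := by positivity
    linarith
  have hb : ∀ j ∈ Ioc 0 H, 0 ≤ a j + 1/(H:ℝ) ∧ a j + 1/(H:ℝ) ≤ c + 1/(H:ℝ) := by
    intro j hj
    have hj' : j ∈ Icc 1 H := by rw [show Icc 1 H = Ioc 0 H from Finset.Icc_add_one_left_eq_Ioc 0 H]; exact hj
    have := abs_le.mp (ha j hj')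
    constructor <;> linarith [this.1, this.2]
  have main := mainF H hH (c + 1/(H:ℝ)) (fun h => a h + 1/(H:ℝ)) hBH hB0 hb
  have hT : Fv H (Xh (c + 1/(H:ℝ)) (fun h => a h + 1/(H:ℝ)) H)
      = ∑ h ∈ Finset.Icc 1 H,
          ((H : ℝ) - (h : ℝ)) * (c + 1 / (H : ℝ)) * (1 - c - 1 / (H : ℝ)) ^ (h - 1) := by
    rw [show Finset.Icc 1 H = Ioc 0 H from Finset.Icc_add_one_left_eq_Ioc 0 H]
    unfold Fv
    apply Finset.sum_congr rfl
    intro h hh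
    simp only [mem_Ioc] at hh
    have hx : Xh (c + 1/(H:ℝ)) (fun h => a h + 1/(H:ℝ)) H h = c + 1/(H:ℝ) := if_pos hh.2
    have hp : ∏ j ∈ Ioc 0 (h-1), (1 - Xh (c + 1/(H:ℝ)) (fun h => a h + 1/(H:ℝ)) H j)
        = (1 - (c + 1/(H:ℝ)))^(h-1) := by
      rw [Finset.prod_congr rfl (fun j hj => ?_), Finset.prod_const, Nat.card_Ioc, Nat.sub_zero]
      simp only [mem_Ioc] at hj
      have hjH : j ≤ H := le_trans hj.2 (le_trans (Nat.pred_le h) hh.2)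
      simp [Xh, if_pos hjH]
    rw [hx, hp]
    have : (1 - (c + 1/(H:ℝ))) = 1 - c - 1/(H:ℝ) := by ring
    rw [this]
  have hS : Fv H (Xh (c + 1/(H:ℝ)) (fun h => a h + 1/(H:ℝ)) 0)
      = ∑ h ∈ Finset.Icc 1 H,
          ((H : ℝ) - (h : ℝ)) * (a h + 1 / (H : ℝ)) *
            ∏ j ∈ Finset.Icc 1 (h - 1), (1 - a j - 1 / (H : ℝ)) := by
    rw [show Finset.Icc 1 H = Ioc 0 H from Finset.Icc_add_one_left_eq_Ioc 0 H]
    have hic : ∀ n : ℕ, Finset.Icc 1 n = Ioc 0 n := fun n => Finset.Icc_add_one_left_eq_Ioc 0 n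
    simp only [hic]
    unfold Fv
    apply Finset.sum_congr rfl
    intro h hh
    simp only [mem_Ioc] at hh
    have hx : Xh (c + 1/(H:ℝ)) (fun h => a h + 1/(H:ℝ)) 0 h = a h + 1/(H:ℝ) := by
      simp only [Xh, if_neg (by omega : ¬ h ≤ 0)]
    rw [hx]
    congr 1
    apply Finset.prod_congr rfl
    intro j hj
    simp only [mem_Ioc] at hj
    simp only [Xh, if_neg (by omega : ¬ j ≤ 0)]
    ring
  rw [← hT, ← hS]
  have hL : ∑ h ∈ Finset.Icc 1 (H/2), (c - a h)
      = ∑ h ∈ Finset.Icc 1 (H/2), ((c + 1/(H:ℝ)) - (a h + 1/(H:ℝ))) := by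
    apply Finset.sum_congr rfl
    intro h _
    ring
  rw [hL]
  exact main
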